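/- arXiv:1310.2416 — 6 statements merged into one kernel-verified Lean document; each statement's English description precedes it below -/
import Mathlib

section
/- Let (b_n)_{n≥1} be a sequence of nonzero elements of a GCD domain R and define a_n = ∏_{d | n} b_d. Then (a_n) is a strong divisibility sequence if and only if for all positive integers m, n with m ∤ n and n ∤ m, gcd(b_m, b_n) = 1. -/
private lemma unit_gcd_prod {R : Type*} [CommMonoidWithZero R] [GCDMonoid R]
    (y : R) (s : Finset ℕ) (f : ℕ → R) (h : ∀ d ∈ s, IsUnit (gcd y (f d))) :
    IsUnit (gcd y (∏ d ∈ s, f d)) := by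
  induction s using Finset.induction_on with
  | empty => exact isUnit_of_dvd_one (by simpa using gcd_dvd_right y 1)
  | @insert a s hx ih =>
    rw [Finset.prod_insert hx]
    have h1 := h a (Finset.mem_insert_self a s)
    have h2 := ih fun d hd => h d (Finset.mem_insert_of_mem hd)
    exact isUnit_of_dvd_unit (gcd_mul_dvd_mul_gcd y (f a) _) (h1.mul h2)

private lemma unit_gcd_prod_prod {R : Type*} [CommMonoidWithZero R] [GCDMonoid R]
    (s t : Finset ℕ) (f : ℕ → R)
    (h : ∀ d ∈ s, ∀ e ∈ t, IsUnit (gcd (f d) (f e))) :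
    IsUnit (gcd (∏ d ∈ s, f d) (∏ e ∈ t, f e)) := by
  apply unit_gcd_prod
  intro e he
  have : IsUnit (gcd (f e) (∏ d ∈ s, f d)) := by
    apply unit_gcd_prod
    intro d hd
    exact ((gcd_comm' (f d) (f e)).isUnit_iff).mp (h d hd e he)
  exact ((gcd_comm' (f e) _).isUnit_iff).mp this

/-- For `a n = ∏_{d ∣ n} b d`, the sequence `(a n)` is a strong divisibility
sequence iff `b m` and `b n` are relatively prime whenever `m ∤ n` and `n ∤ m`. -/
theorem special_strong_divisibility_iff {R : Type*} [CommRing R] [IsDomain R] [GCDMonoid R]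
    (b : ℕ → R) (hb : ∀ n, 1 ≤ n → b n ≠ 0)
    (a : ℕ → R) (hab : ∀ n, 1 ≤ n → a n = ∏ d ∈ n.divisors, b d) :
    (∀ m n, 1 ≤ m → 1 ≤ n → Associated (gcd (a m) (a n)) (a (Nat.gcd m n))) ↔
    (∀ m n, 1 ≤ m → 1 ≤ n → ¬ m ∣ n → ¬ n ∣ m → IsUnit (gcd (b m) (b n))) := by
  -- decomposition lemma
  have key : ∀ m : ℕ, 1 ≤ m → ∀ g : ℕ, 1 ≤ g → g ∣ m →
      a m = a g * ∏ d ∈ m.divisors \ g.divisors, b d := by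
    intro m hm g hg hgm
    have hsub : g.divisors ⊆ m.divisors :=
      Nat.divisors_subset_of_dvd (by omega) hgm
    rw [hab m hm, hab g hg, ← Finset.prod_sdiff hsub, mul_comm]
  have hane : ∀ g : ℕ, 1 ≤ g → a g ≠ 0 := by
    intro g hg
    rw [hab g hg]
    exact Finset.prod_ne_zero_iff.mpr fun d hd =>
      hb d (Nat.pos_of_mem_divisors hd)
  constructor
  · -- strong divisibility → coprimality
    intro H m n hm hn hmn hnm
    set g := Nat.gcd m n with hg
    have hg1 : 1 ≤ g := Nat.gcd_pos_of_pos_left n hm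
    have hgm : g ∣ m := Nat.gcd_dvd_left m n
    have hgn : g ∣ n := Nat.gcd_dvd_right m n
    have e1 := key m hm g hg1 hgm
    have e2 := key n hn g hg1 hgn
    have hassoc := H m n hm hn
    rw [e1, e2, ← hg] at hassoc
    have h2 : Associated (a g * gcd (∏ d ∈ m.divisors \ g.divisors, b d)
        (∏ d ∈ n.divisors \ g.divisors, b d)) (a g * 1) := by
      refine Associated.trans (gcd_mul_left' _ _ _).symm ?_
      rw [mul_one]; exact hassoc
    have hunit : IsUnit (gcd (∏ d ∈ m.divisors \ g.divisors, b d)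
        (∏ d ∈ n.divisors \ g.divisors, b d)) := by
      have := h2.of_mul_left (Associated.refl (a g)) (hane g hg1)
      exact associated_one_iff_isUnit.mp this
    -- gcd (b m) (b n) divides this unit
    have hmem1 : m ∈ m.divisors \ g.divisors := by
      rw [Finset.mem_sdiff, Nat.mem_divisors, Nat.mem_divisors]
      refine ⟨⟨dvd_refl m, by omega⟩, ?_⟩
      rintro ⟨hmg, -⟩
      exact hmn (hmg.trans hgn)
    have hmem2 : n ∈ n.divisors \ g.divisors := by
      rw [Finset.mem_sdiff, Nat.mem_divisors, Nat.mem_divisors]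
      refine ⟨⟨dvd_refl n, by omega⟩, ?_⟩
      rintro ⟨hng, -⟩
      exact hnm (hng.trans hgm)
    have hd : gcd (b m) (b n) ∣ gcd (∏ d ∈ m.divisors \ g.divisors, b d)
        (∏ d ∈ n.divisors \ g.divisors, b d) :=
      dvd_gcd ((gcd_dvd_left _ _).trans (Finset.dvd_prod_of_mem b hmem1))
        ((gcd_dvd_right _ _).trans (Finset.dvd_prod_of_mem b hmem2))
    exact isUnit_of_dvd_unit hd hunit
  · -- coprimality → strong divisibility
    intro H m n hm hn
    set g := Nat.gcd m n with hg
    have hg1 : 1 ≤ g := Nat.gcd_pos_of_pos_left n hm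
    have hgm : g ∣ m := Nat.gcd_dvd_left m n
    have hgn : g ∣ n := Nat.gcd_dvd_right m n
    rw [key m hm g hg1 hgm, key n hn g hg1 hgn]
    have hunit : IsUnit (gcd (∏ d ∈ m.divisors \ g.divisors, b d)
        (∏ e ∈ n.divisors \ g.divisors, b e)) := by
      apply unit_gcd_prod_prod
      intro d hd e he
      rw [Finset.mem_sdiff, Nat.mem_divisors, Nat.mem_divisors] at hd he
      obtain ⟨⟨hdm, hm0⟩, hdg⟩ := hd
      obtain ⟨⟨hen, hn0⟩, heg⟩ := he
      have hd1 : 1 ≤ d := Nat.pos_of_dvd_of_pos hdm (by omega)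
      have he1 : 1 ≤ e := Nat.pos_of_dvd_of_pos hen (by omega)
      have hdn : ¬ d ∣ n := fun h => hdg ⟨Nat.dvd_gcd hdm h, by omega⟩
      have hem : ¬ e ∣ m := fun h => heg ⟨Nat.dvd_gcd h hen, by omega⟩
      exact H d e hd1 he1 (fun h => hdn (h.trans hen)) (fun h => hem (h.trans hdm))
    obtain ⟨u, hu⟩ := hunit
    exact (gcd_mul_left' _ _ _).trans
      (by rw [← hu]; exact (associated_mul_unit_right (a g) _ u.isUnit).symm)
end

section
/- Let (a_n)_{n≥1} be a sequence of nonzero elements of a GCD domain R, and define its lcm-sequence (c_n) by c_1 = a_1 and c_n = lcm(a_1,...,a_n)/lcm(a_1,...,a_{n-1}) for n ≥ 2. Then (a_n) is a strong divisibility sequence if and only if a_n is associated to ∏_{d | n} c_d for all n ≥ 1. -/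
section AuxGCD

variable {R : Type*} [CommMonoidWithZero R] [GCDMonoid R]

theorem gcd_congr' {x x' y y' : R} (hx : Associated x x') (hy : Associated y y') :
    Associated (gcd x y) (gcd x' y') :=
  associated_of_dvd_dvd
    (dvd_gcd ((gcd_dvd_left _ _).trans hx.dvd) ((gcd_dvd_right _ _).trans hy.dvd))
    (dvd_gcd ((gcd_dvd_left _ _).trans hx.symm.dvd) ((gcd_dvd_right _ _).trans hy.symm.dvd))

theorem lcm_congr_right' {x y y' : R} (h : Associated y y') :
    Associated (lcm x y) (lcm x y') :=
  associated_of_dvd_dvd (lcm_dvd (dvd_lcm_left _ _) (h.dvd.trans (dvd_lcm_right _ _)))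
    (lcm_dvd (dvd_lcm_left _ _) (h.symm.dvd.trans (dvd_lcm_right _ _)))

theorem gcd_comm'' (x y : R) : Associated (gcd x y) (gcd y x) :=
  associated_of_dvd_dvd (dvd_gcd (gcd_dvd_right _ _) (gcd_dvd_left _ _))
    (dvd_gcd (gcd_dvd_right _ _) (gcd_dvd_left _ _))

/-- gcd distributes over lcm in a GCD monoid. -/
theorem gcd_lcm_distrib' {x b c : R} (hx : x ≠ 0) :
    Associated (gcd x (lcm b c)) (lcm (gcd x b) (gcd x c)) := by
  set d := gcd x (lcm b c) with hd
  set e := gcd x (gcd b c) with he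
  have hdx : d ∣ x := gcd_dvd_left _ _
  have hdl : d ∣ lcm b c := gcd_dvd_right _ _
  have hex : e ∣ x := gcd_dvd_left _ _
  have heb : e ∣ b := (gcd_dvd_right _ _).trans (gcd_dvd_left b c)
  have hec : e ∣ c := (gcd_dvd_right _ _).trans (gcd_dvd_right b c)
  have he0 : e ≠ 0 := fun h => hx ((gcd_eq_zero_iff _ _).1 h).1
  refine associated_of_dvd_dvd ?_ ?_
  · -- hard direction: d ∣ lcm (gcd x b) (gcd x c)
    have hchain : Associated (gcd (gcd (x*x) (b*x)) (gcd (x*c) (b*c))) (gcd x b * gcd x c) :=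
      (gcd_congr' (gcd_mul_right' x x b) (gcd_mul_right' c x b)).trans
        (gcd_mul_left' (gcd x b) x c)
    have hprod : d * e ∣ gcd x b * gcd x c := by
      refine (dvd_gcd (dvd_gcd ?_ ?_) (dvd_gcd ?_ ?_)).trans hchain.dvd
      · exact mul_dvd_mul hdx hex
      · rw [mul_comm b x]; exact mul_dvd_mul hdx heb
      · exact mul_dvd_mul hdx hec
      · exact (mul_dvd_mul hdl (dvd_gcd heb hec)).trans
          ((mul_comm (gcd b c) (lcm b c) ▸ (gcd_mul_lcm b c).dvd))
    have hee' : Associated (gcd (gcd x b) (gcd x c)) e :=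
      associated_of_dvd_dvd
        (dvd_gcd ((gcd_dvd_left _ _).trans (gcd_dvd_left _ _))
          (dvd_gcd ((gcd_dvd_left _ _).trans (gcd_dvd_right _ _))
            ((gcd_dvd_right _ _).trans (gcd_dvd_right _ _))))
        (dvd_gcd (dvd_gcd hex heb) (dvd_gcd hex hec))
    have h2 : d * e ∣ lcm (gcd x b) (gcd x c) * e := by
      refine hprod.trans ?_
      have h3 := ((gcd_mul_lcm (gcd x b) (gcd x c)).symm.trans
        (hee'.mul_right (lcm (gcd x b) (gcd x c)))).dvd
      refine h3.trans ?_
      rw [mul_comm]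
    exact (mul_dvd_mul_iff_right he0).1 h2
  · exact lcm_dvd (dvd_gcd (gcd_dvd_left _ _) ((gcd_dvd_right _ _).trans (dvd_lcm_left _ _)))
      (dvd_gcd (gcd_dvd_left _ _) ((gcd_dvd_right _ _).trans (dvd_lcm_right _ _)))

/-- an lcm of a list of elements. -/
noncomputable def mylcm : List R → R
  | [] => 1
  | x :: l => lcm x (mylcm l)

theorem dvd_mylcm {x : R} {l : List R} (h : x ∈ l) : x ∣ mylcm l := by
  induction l with
  | nil => simp at h
  | cons y l ih =>
    rcases List.mem_cons.1 h with rfl | h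
    · exact dvd_lcm_left _ _
    · exact (ih h).trans (dvd_lcm_right _ _)

theorem mylcm_dvd {z : R} {l : List R} (h : ∀ x ∈ l, x ∣ z) : mylcm l ∣ z := by
  induction l with
  | nil => exact one_dvd z
  | cons y l ih =>
    exact lcm_dvd (h y List.mem_cons_self) (ih fun x hx => h x (List.mem_cons_of_mem _ hx))

theorem gcd_mylcm {x : R} (hx : x ≠ 0) (l : List R) :
    Associated (gcd x (mylcm l)) (mylcm (l.map (gcd x))) := by
  induction l with
  | nil =>
    simp only [List.map_nil]
    exact associated_of_dvd_dvd (gcd_dvd_right _ _) (one_dvd _)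
  | cons y l ih =>
    show Associated (gcd x (lcm y (mylcm l))) (lcm (gcd x y) (mylcm (l.map (gcd x))))
    exact (gcd_lcm_distrib' hx).trans (lcm_congr_right' ih)

end AuxGCD

/-- `iterLcm a n` is an lcm of `a 1, a 2, …, a n` (with `iterLcm a 0 = 1`). -/
noncomputable def iterLcm {R : Type*} [CommRing R] [IsDomain R] [GCDMonoid R]
    (a : ℕ → R) : ℕ → R
  | 0 => 1
  | n + 1 => lcm (iterLcm a n) (a (n + 1))

section Main

variable {R : Type*} [CommRing R] [IsDomain R] [GCDMonoid R]

theorem dvd_iterLcm (a : ℕ → R) {k n : ℕ} (h1 : 1 ≤ k) (h2 : k ≤ n) : a k ∣ iterLcm a n := by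
  induction n with
  | zero => omega
  | succ m ih =>
    rcases Nat.lt_or_ge k (m+1) with h | h
    · exact (ih (by omega)).trans (dvd_lcm_left _ _)
    · have : k = m + 1 := by omega
      subst this; exact dvd_lcm_right _ _

theorem iterLcm_dvd (a : ℕ → R) {z : R} {n : ℕ} (h : ∀ k, 1 ≤ k → k ≤ n → a k ∣ z) :
    iterLcm a n ∣ z := by
  induction n with
  | zero => exact one_dvd z
  | succ m ih =>
    exact lcm_dvd (ih fun k h1 h2 => h k h1 (by omega)) (h (m+1) (by omega) le_rfl)

theorem iterLcm_ne_zero (a : ℕ → R) (ha : ∀ n, 1 ≤ n → a n ≠ 0) (n : ℕ) :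
    iterLcm a n ≠ 0 := by
  induction n with
  | zero => exact one_ne_zero
  | succ m ih =>
    show lcm (iterLcm a m) (a (m+1)) ≠ 0
    simp only [Ne, lcm_eq_zero_iff]
    rintro (h | h)
    · exact ih h
    · exact ha (m+1) (by omega) h

/-- `iterLcm` as a `mylcm` of a list. -/
theorem iterLcm_assoc_mylcm (a : ℕ → R) (n : ℕ) :
    Associated (iterLcm a n) (mylcm ((List.range n).map fun k => a (k+1))) := by
  refine associated_of_dvd_dvd ?_ ?_
  · refine iterLcm_dvd a fun k h1 h2 => dvd_mylcm ?_
    simp only [List.mem_map, List.mem_range]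
    exact ⟨k - 1, by omega, by congr 1; omega⟩
  · refine mylcm_dvd fun x hx => ?_
    simp only [List.mem_map, List.mem_range] at hx
    obtain ⟨k, hk, rfl⟩ := hx
    exact dvd_iterLcm a (by omega) (by omega)

/-- key identity: `gcd(L_{n-1}, a n) * c n ~ a n`. -/
theorem key0 (a c : ℕ → R) (ha : ∀ n, 1 ≤ n → a n ≠ 0)
    (hc : ∀ n, 1 ≤ n → Associated (iterLcm a n) (iterLcm a (n - 1) * c n))
    {n : ℕ} (hn : 1 ≤ n) :
    Associated (gcd (iterLcm a (n-1)) (a n) * c n) (a n) := by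
  obtain ⟨m, rfl⟩ : ∃ m, n = m + 1 := ⟨n - 1, by omega⟩
  have h1 : Associated (gcd (iterLcm a m) (a (m+1)) * iterLcm a (m+1))
      (iterLcm a m * a (m+1)) := gcd_mul_lcm _ _
  have h2 := hc (m+1) (by omega)
  simp only [Nat.add_sub_cancel] at h2 ⊢
  have h3 : Associated (iterLcm a m * (gcd (iterLcm a m) (a (m+1)) * c (m+1)))
      (iterLcm a m * a (m+1)) := by
    have h4 := ((Associated.refl (gcd (iterLcm a m) (a (m+1)))).mul_mul h2).symm.trans h1
    have heq : iterLcm a m * (gcd (iterLcm a m) (a (m+1)) * c (m+1))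
        = gcd (iterLcm a m) (a (m+1)) * (iterLcm a m * c (m+1)) := by ring
    rw [heq]; exact h4
  exact h3.of_mul_left (Associated.refl _) (iterLcm_ne_zero a ha m)

theorem c_ne_zero (a c : ℕ → R) (ha : ∀ n, 1 ≤ n → a n ≠ 0)
    (hc : ∀ n, 1 ≤ n → Associated (iterLcm a n) (iterLcm a (n - 1) * c n))
    {n : ℕ} (hn : 1 ≤ n) : c n ≠ 0 := by
  intro h
  have h2 := hc n hn
  rw [h, mul_zero] at h2
  exact iterLcm_ne_zero a ha n ((associated_zero_iff_eq_zero _).1 h2)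

/-- The key lemma: if `S` is a divisor-closed finite set of positive integers on which
`a` behaves like a strong divisibility sequence and `a d ~ ∏_{e ∣ d} c e`, then the lcm of
`a` over `S` is associated to `∏_{d ∈ S} c d`. -/
theorem lcm_prod_aux (a c : ℕ → R) (ha : ∀ n, 1 ≤ n → a n ≠ 0)
    (hcne : ∀ n, 1 ≤ n → c n ≠ 0) :
    ∀ N : ℕ, ∀ S : Finset ℕ, S.card ≤ N → (0 : ℕ) ∉ S →
    (∀ d ∈ S, ∀ e : ℕ, e ∣ d → 1 ≤ e → e ∈ S) →
    (∀ d ∈ S, ∀ e ∈ S, Associated (gcd (a d) (a e)) (a (Nat.gcd d e))) →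
    (∀ d ∈ S, Associated (a d) (∏ e ∈ d.divisors, c e)) →
    Associated (mylcm (S.toList.map a)) (∏ d ∈ S, c d) := by
  intro N
  induction N with
  | zero =>
    intro S hcard _ _ _ _
    have : S = ∅ := Finset.card_eq_zero.1 (Nat.le_zero.1 hcard)
    subst this
    simp only [Finset.toList_empty, List.map_nil, Finset.prod_empty]
    exact Associated.refl _
  | succ N IH =>
    intro S hcard hS0 hdc hsds hprod
    rcases S.eq_empty_or_nonempty with rfl | hne
    · simp only [Finset.toList_empty, List.map_nil, Finset.prod_empty]
      exact Associated.refl _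
    set m := S.max' hne with hm
    have hmS : m ∈ S := S.max'_mem hne
    have hm1 : 1 ≤ m := Nat.one_le_iff_ne_zero.2 (fun h => hS0 (h ▸ hmS))
    have hle : ∀ d ∈ S, d ≤ m := fun d hd => S.le_max' d hd
    set S' := S.erase m with hS'
    have hS'sub : S' ⊆ S := Finset.erase_subset _ _
    have hS'0 : (0:ℕ) ∉ S' := fun h => hS0 (hS'sub h)
    have hS'card : S'.card ≤ N := by
      have h2 : 0 < S.card := Finset.card_pos.2 hne
      rw [hS', Finset.card_erase_of_mem hmS]
      omega
    have hS'dc : ∀ d ∈ S', ∀ e : ℕ, e ∣ d → 1 ≤ e → e ∈ S' := by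
      intro d hd e he he1
      have hdS := hS'sub hd
      have heS := hdc d hdS e he he1
      refine Finset.mem_erase.2 ⟨?_, heS⟩
      intro hem
      have hd1 : 1 ≤ d := Nat.one_le_iff_ne_zero.2 (fun h => hS0 (h ▸ hdS))
      have h2 : m ≤ d := Nat.le_of_dvd (by omega) (hem ▸ he)
      have h3 : d ≤ m := hle d hdS
      exact (Finset.mem_erase.1 hd).1 (by omega)
    set M' := mylcm (S'.toList.map a) with hM'
    -- Step 1 : split off the max element
    have hsplit : Associated (mylcm (S.toList.map a)) (lcm (a m) M') := by
      refine associated_of_dvd_dvd (mylcm_dvd ?_) (lcm_dvd ?_ ?_)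
      · intro x hx
        simp only [List.mem_map, Finset.mem_toList] at hx
        obtain ⟨d, hd, rfl⟩ := hx
        rcases eq_or_ne d m with rfl | hdm
        · exact dvd_lcm_left _ _
        · have : d ∈ S' := Finset.mem_erase.2 ⟨hdm, hd⟩
          exact (dvd_mylcm (by simp only [List.mem_map, Finset.mem_toList]; exact ⟨d, this, rfl⟩)).trans
            (dvd_lcm_right _ _)
      · exact dvd_mylcm (by simp only [List.mem_map, Finset.mem_toList]; exact ⟨m, hmS, rfl⟩)
      · refine mylcm_dvd ?_
        intro x hx
        simp only [List.mem_map, Finset.mem_toList] at hx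
        obtain ⟨d, hd, rfl⟩ := hx
        exact dvd_mylcm (by simp only [List.mem_map, Finset.mem_toList]; exact ⟨d, hS'sub hd, rfl⟩)
    set T := m.properDivisors with hT
    have hTS' : T ⊆ S' := by
      intro e he
      rw [hT, Nat.mem_properDivisors] at he
      have he1 : 1 ≤ e := Nat.one_le_iff_ne_zero.2
        (by rintro rfl; exact absurd (Nat.eq_zero_of_zero_dvd he.1) (by omega))
      exact Finset.mem_erase.2 ⟨by omega, hdc m hmS e he.1 he1⟩
    -- Step 3: gcd (a m) M' is the lcm of a over the proper divisors of m
    have hgcdM : Associated (gcd (a m) M') (mylcm (T.toList.map a)) := by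
      refine ((gcd_mylcm (ha m hm1) _).trans (associated_of_dvd_dvd (mylcm_dvd ?_) (mylcm_dvd ?_)))
      · intro x hx
        simp only [List.mem_map, Finset.mem_toList] at hx
        obtain ⟨y, ⟨d, hd, rfl⟩, rfl⟩ := hx
        have hdS := hS'sub hd
        have hd1 : 1 ≤ d := Nat.one_le_iff_ne_zero.2 (fun h => hS0 (h ▸ hdS))
        have hg := hsds m hmS d hdS
        have hgT : Nat.gcd m d ∈ T := by
          rw [hT, Nat.mem_properDivisors]
          constructor
          · exact Nat.gcd_dvd_left m d
          · have h1 : Nat.gcd m d ≤ m := Nat.le_of_dvd (by omega) (Nat.gcd_dvd_left m d)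
            have h2 : Nat.gcd m d ≠ m := by
              intro h
              have hmd : m ∣ d := h ▸ Nat.gcd_dvd_right m d
              have : m ≤ d := Nat.le_of_dvd (by omega) hmd
              have := hle d hdS
              exact (Finset.mem_erase.1 hd).1 (by omega)
            omega
        exact hg.dvd.trans (dvd_mylcm
          (by simp only [List.mem_map, Finset.mem_toList]; exact ⟨_, hgT, rfl⟩))
      · intro x hx
        simp only [List.mem_map, Finset.mem_toList] at hx
        obtain ⟨e, he, rfl⟩ := hx
        have heS' : e ∈ S' := hTS' he
        have heS := hS'sub heS'
        have hedvd : e ∣ m := (Nat.mem_properDivisors.1 he).1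
        have hge : Nat.gcd m e = e := Nat.gcd_eq_right hedvd
        have hg := (hsds m hmS e heS).symm
        rw [hge] at hg
        refine hg.dvd.trans (dvd_mylcm ?_)
        simp only [List.mem_map, Finset.mem_toList]
        exact ⟨a e, ⟨e, heS', rfl⟩, rfl⟩
    -- Step 4: induction hypothesis on T
    have hTcard : T.card ≤ N := le_trans (Finset.card_le_card hTS') hS'card
    have hIHT : Associated (mylcm (T.toList.map a)) (∏ d ∈ T, c d) := by
      refine IH T hTcard ?_ ?_ ?_ ?_
      · intro h; rw [hT, Nat.mem_properDivisors] at h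
        exact absurd (Nat.eq_zero_of_zero_dvd h.1) (by omega)
      · intro d hd e he he1
        rw [hT, Nat.mem_properDivisors] at hd ⊢
        have hd1 : 0 < d := Nat.pos_of_dvd_of_pos hd.1 (by omega)
        exact ⟨he.trans hd.1, lt_of_le_of_lt (Nat.le_of_dvd hd1 he) hd.2⟩
      · intro d hd e he
        exact hsds d (hS'sub (hTS' hd)) e (hS'sub (hTS' he))
      · intro d hd
        exact hprod d (hS'sub (hTS' hd))
    -- Step 5: induction hypothesis on S'
    have hIHS' : Associated M' (∏ d ∈ S', c d) :=
      IH S' hS'card hS'0 hS'dc (fun d hd e he => hsds d (hS'sub hd) e (hS'sub he))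
        (fun d hd => hprod d (hS'sub hd))
    -- Step 6
    set P := ∏ d ∈ T, c d with hP
    have hP0 : P ≠ 0 := by
      rw [hP, Finset.prod_ne_zero_iff]
      intro e he
      rw [Nat.mem_properDivisors] at he
      exact hcne e (Nat.one_le_iff_ne_zero.2
        (by rintro rfl; exact absurd (Nat.eq_zero_of_zero_dvd he.1) (by omega)))
    have ham : Associated (a m) (c m * P) := by
      have h1 := hprod m hmS
      rw [← Nat.insert_self_properDivisors (by omega : m ≠ 0),
        Finset.prod_insert Nat.self_notMem_properDivisors] at h1
      exact h1
    have hmain : Associated (lcm (a m) M' * P) ((c m * ∏ d ∈ S', c d) * P) := by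
      have h1 : Associated (lcm (a m) M' * P) (lcm (a m) M' * gcd (a m) M') :=
        (Associated.refl _).mul_mul (hgcdM.trans hIHT).symm
      have h2 : Associated (lcm (a m) M' * gcd (a m) M') (a m * M') := by
        have h3 := gcd_mul_lcm (a m) M'
        rwa [mul_comm] at h3
      have h3 : Associated (a m * M') ((c m * P) * (∏ d ∈ S', c d)) := ham.mul_mul hIHS'
      have heq : (c m * P) * (∏ d ∈ S', c d) = (c m * ∏ d ∈ S', c d) * P := by ring
      exact ((h1.trans h2).trans h3).trans (heq ▸ Associated.refl _)
    have hlcm : Associated (lcm (a m) M') (c m * ∏ d ∈ S', c d) :=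
      hmain.of_mul_right (Associated.refl P) hP0
    have hfinal : (∏ d ∈ S, c d) = c m * ∏ d ∈ S', c d := (Finset.mul_prod_erase S c hmS).symm
    rw [hfinal]
    exact hsplit.trans hlcm

end Main

/-- Main theorem: if `(c n)` is the lcm-sequence of `(a n)`, i.e. `c 1 = a 1` and
`c n = lcm(a 1,…,a n) / lcm(a 1,…,a (n-1))` for `n ≥ 2` (expressed multiplicatively,
up to units), then `(a n)` is a strong divisibility sequence iff
`a n` is associated to `∏_{d ∣ n} c d` for all `n ≥ 1`. -/
theorem strong_divisibility_iff_lcm_sequence_product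
    {R : Type*} [CommRing R] [IsDomain R] [GCDMonoid R]
    (a : ℕ → R) (ha : ∀ n, 1 ≤ n → a n ≠ 0)
    (c : ℕ → R)
    (hc : ∀ n, 1 ≤ n → Associated (iterLcm a n) (iterLcm a (n - 1) * c n)) :
    (∀ m n, 1 ≤ m → 1 ≤ n → Associated (gcd (a m) (a n)) (a (Nat.gcd m n))) ↔
    (∀ n, 1 ≤ n → Associated (a n) (∏ d ∈ n.divisors, c d)) := by
  have hcne : ∀ k, 1 ≤ k → c k ≠ 0 := fun k hk => c_ne_zero a c ha hc hk
  constructor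
  · -- strong divisibility → product formula
    intro hsds n
    induction n using Nat.strong_induction_on with
    | _ n IHn =>
      intro hn
      have hkey := key0 a c ha hc hn
      -- gcd (iterLcm a (n-1)) (a n) ~ lcm of a over proper divisors of n
      have h1 : Associated (gcd (iterLcm a (n-1)) (a n)) (gcd (a n) (iterLcm a (n-1))) :=
        gcd_comm'' _ _
      have h2 : Associated (gcd (a n) (iterLcm a (n-1)))
          (mylcm (((List.range (n-1)).map fun k => a (k+1)).map (gcd (a n)))) :=
        (gcd_congr' (Associated.refl _) (iterLcm_assoc_mylcm a (n-1))).trans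
          (gcd_mylcm (ha n hn) _)
      have h3 : Associated (mylcm (((List.range (n-1)).map fun k => a (k+1)).map (gcd (a n))))
          (mylcm (n.properDivisors.toList.map a)) := by
        refine associated_of_dvd_dvd (mylcm_dvd ?_) (mylcm_dvd ?_)
        · intro x hx
          simp only [List.mem_map, List.mem_range] at hx
          obtain ⟨y, ⟨k, hk, rfl⟩, rfl⟩ := hx
          have hg := hsds n (k+1) hn (by omega)
          have hmem : Nat.gcd n (k+1) ∈ n.properDivisors := by
            rw [Nat.mem_properDivisors]
            refine ⟨Nat.gcd_dvd_left n (k+1), ?_⟩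
            have : Nat.gcd n (k+1) ≤ k+1 := Nat.le_of_dvd (by omega) (Nat.gcd_dvd_right n (k+1))
            omega
          exact hg.dvd.trans (dvd_mylcm
            (by simp only [List.mem_map, Finset.mem_toList]; exact ⟨_, hmem, rfl⟩))
        · intro x hx
          simp only [List.mem_map, Finset.mem_toList] at hx
          obtain ⟨e, he, rfl⟩ := hx
          rw [Nat.mem_properDivisors] at he
          have he1 : 1 ≤ e := Nat.one_le_iff_ne_zero.2
            (by rintro rfl; exact absurd (Nat.eq_zero_of_zero_dvd he.1) (by omega))
          have hge : Nat.gcd n e = e := Nat.gcd_eq_right he.1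
          have hg := (hsds n e hn he1).symm
          rw [hge] at hg
          refine hg.dvd.trans (dvd_mylcm ?_)
          simp only [List.mem_map, List.mem_range]
          exact ⟨a e, ⟨e - 1, by omega, by congr 1; omega⟩, rfl⟩
      have hbig : Associated (mylcm (n.properDivisors.toList.map a))
          (∏ d ∈ n.properDivisors, c d) := by
        refine lcm_prod_aux a c ha hcne n.properDivisors.card n.properDivisors le_rfl ?_ ?_ ?_ ?_
        · intro h; rw [Nat.mem_properDivisors] at h
          exact absurd (Nat.eq_zero_of_zero_dvd h.1) (by omega)
        · intro d hd e he he1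
          rw [Nat.mem_properDivisors] at hd ⊢
          have hd1 : 0 < d := Nat.pos_of_dvd_of_pos hd.1 (by omega)
          exact ⟨he.trans hd.1, lt_of_le_of_lt (Nat.le_of_dvd hd1 he) hd.2⟩
        · intro d hd e he
          rw [Nat.mem_properDivisors] at hd he
          have hd1 : 0 < d := Nat.pos_of_dvd_of_pos hd.1 (by omega)
          have he1 : 0 < e := Nat.pos_of_dvd_of_pos he.1 (by omega)
          exact hsds d e hd1 he1
        · intro d hd
          rw [Nat.mem_properDivisors] at hd
          have hd1 : 0 < d := Nat.pos_of_dvd_of_pos hd.1 (by omega)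
          exact IHn d hd.2 hd1
      have hfin : Associated (gcd (iterLcm a (n-1)) (a n)) (∏ d ∈ n.properDivisors, c d) :=
        ((h1.trans h2).trans h3).trans hbig
      have : Associated (a n) ((∏ d ∈ n.properDivisors, c d) * c n) :=
        hkey.symm.trans (hfin.mul_right (c n))
      rw [← Nat.insert_self_properDivisors (by omega : n ≠ 0),
        Finset.prod_insert Nat.self_notMem_properDivisors, mul_comm]
      exact this
  · -- product formula → strong divisibility
    intro hprod
    have hdvdseq : ∀ i j, 1 ≤ i → 1 ≤ j → i ∣ j → a i ∣ a j := by
      intro i j hi hj hij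
      refine ((hprod i hi).dvd.trans ?_).trans (hprod j hj).symm.dvd
      exact Finset.prod_dvd_prod_of_subset _ _ c
        (Nat.divisors_subset_of_dvd (by omega) hij)
    have hQ : ∀ n, 1 ≤ n → ∀ m, 1 ≤ m → m ≤ n →
        Associated (gcd (a m) (a n)) (a (Nat.gcd m n)) := by
      intro n
      induction n using Nat.strong_induction_on with
      | _ n IHn =>
        intro hn m hm hmn
        have hpair : ∀ d e, 1 ≤ d → 1 ≤ e → d < n → e < n →
            Associated (gcd (a d) (a e)) (a (Nat.gcd d e)) := by
          intro d e hd he hdn hen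
          rcases le_total d e with h | h
          · exact IHn e hen he d hd h
          · refine (gcd_comm'' _ _).trans ((IHn d hdn hd e he h).trans ?_)
            rw [Nat.gcd_comm e d]
        rcases eq_or_lt_of_le hmn with rfl | hlt
        · rw [Nat.gcd_self]
          exact associated_of_dvd_dvd (gcd_dvd_left _ _) (dvd_gcd dvd_rfl dvd_rfl)
        · set g := Nat.gcd m n with hgdef
          have hg1 : 1 ≤ g := Nat.gcd_pos_of_pos_left n hm
          have hgm : g ∣ m := Nat.gcd_dvd_left m n
          have hgn : g ∣ n := Nat.gcd_dvd_right m n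
          have dvd1 : a g ∣ gcd (a m) (a n) :=
            dvd_gcd (hdvdseq g m hg1 hm hgm) (hdvdseq g n hg1 hn hgn)
          have hkey := key0 a c ha hc hn
          have hanp := hprod n hn
          rw [← Nat.insert_self_properDivisors (by omega : n ≠ 0),
            Finset.prod_insert Nat.self_notMem_properDivisors] at hanp
          -- hanp : a n ~ c n * ∏ proper divisors
          have hgP : Associated (gcd (iterLcm a (n-1)) (a n))
              (∏ d ∈ n.properDivisors, c d) := by
            have h1 : Associated (gcd (iterLcm a (n-1)) (a n) * c n)
                ((∏ d ∈ n.properDivisors, c d) * c n) := by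
              refine hkey.trans (hanp.trans ?_)
              rw [mul_comm]
            exact h1.of_mul_right (Associated.refl _) (hcne n hn)
          have hbig : Associated (mylcm (n.properDivisors.toList.map a))
              (∏ d ∈ n.properDivisors, c d) := by
            refine lcm_prod_aux a c ha hcne n.properDivisors.card n.properDivisors
              le_rfl ?_ ?_ ?_ ?_
            · intro h; rw [Nat.mem_properDivisors] at h
              exact absurd (Nat.eq_zero_of_zero_dvd h.1) (by omega)
            · intro d hd e he he1
              rw [Nat.mem_properDivisors] at hd ⊢
              have hd1 : 0 < d := Nat.pos_of_dvd_of_pos hd.1 (by omega)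
              exact ⟨he.trans hd.1, lt_of_le_of_lt (Nat.le_of_dvd hd1 he) hd.2⟩
            · intro d hd e he
              rw [Nat.mem_properDivisors] at hd he
              have hd1 : 0 < d := Nat.pos_of_dvd_of_pos hd.1 (by omega)
              have he1 : 0 < e := Nat.pos_of_dvd_of_pos he.1 (by omega)
              exact hpair d e hd1 he1 hd.2 he.2
            · intro d hd
              rw [Nat.mem_properDivisors] at hd
              have hd1 : 0 < d := Nat.pos_of_dvd_of_pos hd.1 (by omega)
              exact hprod d hd1
          have step1 : gcd (a m) (a n) ∣ mylcm (n.properDivisors.toList.map a) := by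
            have h1 : gcd (a m) (a n) ∣ gcd (iterLcm a (n-1)) (a n) :=
              dvd_gcd ((gcd_dvd_left _ _).trans (dvd_iterLcm a hm (by omega)))
                (gcd_dvd_right _ _)
            exact (h1.trans hgP.dvd).trans hbig.symm.dvd
          have step2 : gcd (a m) (a n) ∣
              gcd (a m) (mylcm (n.properDivisors.toList.map a)) :=
            dvd_gcd (gcd_dvd_left _ _) step1
          have step3 : gcd (a m) (mylcm (n.properDivisors.toList.map a)) ∣
              mylcm ((n.properDivisors.toList.map a).map (gcd (a m))) :=
            (gcd_mylcm (ha m hm) _).dvd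
          have step4 : mylcm ((n.properDivisors.toList.map a).map (gcd (a m))) ∣ a g := by
            refine mylcm_dvd ?_
            intro x hx
            simp only [List.mem_map, Finset.mem_toList] at hx
            obtain ⟨y, ⟨d, hd, rfl⟩, rfl⟩ := hx
            rw [Nat.mem_properDivisors] at hd
            have hd1 : 0 < d := Nat.pos_of_dvd_of_pos hd.1 (by omega)
            have hgmd : Nat.gcd m d ∣ g :=
              Nat.dvd_gcd (Nat.gcd_dvd_left m d) ((Nat.gcd_dvd_right m d).trans hd.1)
            have hgmd1 : 1 ≤ Nat.gcd m d := Nat.gcd_pos_of_pos_left d hm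
            exact (hpair m d hm hd1 hlt hd.2).dvd.trans
              (hdvdseq (Nat.gcd m d) g hgmd1 hg1 hgmd)
          exact associated_of_dvd_dvd ((step2.trans step3).trans step4) dvd1
    intro m n hm hn
    rcases le_total m n with h | h
    · exact hQ n hn m hm h
    · refine (gcd_comm'' _ _).trans ((hQ m hm n hn h).trans ?_)
      rw [Nat.gcd_comm n m]
end

section
/- If (a_n) is a strong divisibility sequence in a GCD domain and (b_n) is the unique sequence with a_n = ∏_{d|n} b_d, then for every n ≥ 1, lcm(a_1, a_2, ..., a_n) is associated to b_1 · b_2 · ... · b_n. -/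
section Generic

variable {α : Type*} [CommMonoidWithZero α] [NormalizedGCDMonoid α]

theorem my_dvd_antisymm (hn : ∀ x : α, normalize x = x) {x y : α}
    (h1 : x ∣ y) (h2 : y ∣ x) : x = y := by
  have := normalize_eq_normalize h1 h2
  rwa [hn, hn] at this

theorem my_eq_of_associated (hn : ∀ x : α, normalize x = x) {x y : α}
    (h : Associated x y) : x = y :=
  my_dvd_antisymm hn h.dvd h.symm.dvd

theorem my_gcd_lcm_distrib (hn : ∀ x : α, normalize x = x) (a b c : α) :
    gcd a (lcm b c) = lcm (gcd a b) (gcd a c) := by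
  rcases eq_or_ne a 0 with rfl | ha
  · simp [hn]
  apply my_dvd_antisymm hn
  · -- hard direction
    have hg : gcd (gcd a b) (gcd a c) = gcd a (gcd b c) := by
      rw [gcd_assoc]
      have : gcd b (gcd a c) = gcd a (gcd b c) := by
        rw [← gcd_assoc, gcd_comm b a, gcd_assoc]
      rw [this, ← gcd_assoc, gcd_same, hn]
    have hpq : gcd a b * gcd a c
        = gcd (gcd (a * a) (a * c)) (gcd (b * a) (b * c)) := by
      rw [my_eq_of_associated hn (gcd_mul_left' a a c), my_eq_of_associated hn (gcd_mul_left' b a c),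
        my_eq_of_associated hn (gcd_mul_right' (gcd a c) a b)]
    have key4 : gcd a (lcm b c) * gcd a (gcd b c) ∣ gcd a b * gcd a c := by
      rw [hpq]
      refine dvd_gcd (dvd_gcd ?_ ?_) (dvd_gcd ?_ ?_)
      · exact mul_dvd_mul (gcd_dvd_left _ _) (gcd_dvd_left _ _)
      · exact mul_dvd_mul (gcd_dvd_left _ _)
          ((gcd_dvd_right _ _).trans (gcd_dvd_right _ _))
      · rw [mul_comm b a]
        exact mul_dvd_mul (gcd_dvd_left _ _)
          ((gcd_dvd_right _ _).trans (gcd_dvd_left _ _))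
      · calc gcd a (lcm b c) * gcd a (gcd b c)
            ∣ lcm b c * gcd b c :=
              mul_dvd_mul (gcd_dvd_right _ _) (gcd_dvd_right _ _)
          _ ∣ b * c := by
              rw [mul_comm]; exact (gcd_mul_lcm b c).dvd
    have hprod : gcd a b * gcd a c
        = gcd a (gcd b c) * lcm (gcd a b) (gcd a c) := by
      rw [← hg]; exact (my_eq_of_associated hn (gcd_mul_lcm _ _)).symm
    rw [hprod] at key4
    have hne : gcd a (gcd b c) ≠ 0 := fun h => ha ((gcd_eq_zero_iff _ _).mp h).1
    rw [mul_comm (gcd a (lcm b c)) _, mul_dvd_mul_iff_left hne] at key4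
    exact key4
  · -- easy direction
    refine lcm_dvd (dvd_gcd (gcd_dvd_left _ _) ?_) (dvd_gcd (gcd_dvd_left _ _) ?_)
    · exact (gcd_dvd_right a b).trans (dvd_lcm_left b c)
    · exact (gcd_dvd_right a c).trans (dvd_lcm_right b c)

theorem my_gcd_finsetLcm (hn : ∀ x : α, normalize x = x) {β : Type*} [DecidableEq β]
    (z : α) (S : Finset β) (f : β → α) :
    gcd z (S.lcm f) = S.lcm fun d => gcd z (f d) := by
  induction S using Finset.induction_on with
  | empty => simp
  | insert x s hx ih =>
      rw [Finset.lcm_insert, Finset.lcm_insert, my_gcd_lcm_distrib hn, ih]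

theorem key_lemma (hn : ∀ x : α, normalize x = x) (A B : ℕ → α)
    (hsd : ∀ m n, 1 ≤ m → 1 ≤ n → gcd (A m) (A n) = A (Nat.gcd m n))
    (hB : ∀ n, 1 ≤ n → B n ≠ 0)
    (hab : ∀ n, 1 ≤ n → A n = ∏ d ∈ n.divisors, B d) :
    ∀ S : Finset ℕ, 0 ∉ S → (∀ s ∈ S, ∀ d, d ∣ s → d ∈ S) →
      S.lcm A = ∏ d ∈ S, B d := by
  rcases subsingleton_or_nontrivial α with hα | hα
  · exact fun S _ _ => Subsingleton.elim _ _
  intro S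
  induction S using Finset.strongInduction with
  | _ S ih =>
    intro h0 hdc
    rcases S.eq_empty_or_nonempty with rfl | hSne
    · simp
    have hpos : ∀ s ∈ S, 1 ≤ s := fun s hs =>
      Nat.one_le_iff_ne_zero.mpr (fun h => h0 (h ▸ hs))
    set m := S.max' hSne with hm
    have hmS : m ∈ S := S.max'_mem hSne
    have hm1 : 1 ≤ m := hpos m hmS
    have hmax : ∀ s ∈ S, m ∣ s → s = m := fun s hs hms =>
      le_antisymm (S.le_max' s hs) (Nat.le_of_dvd (hpos s hs) hms)
    set S' := S.erase m with hS'
    have hS'sub : S' ⊂ S := Finset.erase_ssubset hmS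
    have h0' : 0 ∉ S' := fun h => h0 (Finset.mem_of_mem_erase h)
    have hpos' : ∀ s ∈ S', 1 ≤ s := fun s hs => hpos s (Finset.mem_of_mem_erase hs)
    have hdc' : ∀ s ∈ S', ∀ d, d ∣ s → d ∈ S' := by
      intro s hs d hd
      have hsS := Finset.mem_of_mem_erase hs
      refine Finset.mem_erase.mpr ⟨?_, hdc s hsS d hd⟩
      rintro rfl
      exact (Finset.ne_of_mem_erase hs) (hmax s hsS hd)
    have hL : S'.lcm A = ∏ d ∈ S', B d := ih S' hS'sub h0' hdc'
    set T := m.properDivisors with hT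
    have hTsub : T ⊆ S' := by
      intro e he
      obtain ⟨hed, helt⟩ := Nat.mem_properDivisors.mp he
      exact Finset.mem_erase.mpr ⟨Nat.ne_of_lt helt, hdc m hmS e hed⟩
    have hTS : T ⊂ S := lt_of_le_of_lt (Finset.le_iff_subset.mpr hTsub) hS'sub
    have h0T : 0 ∉ T := fun h => h0' (hTsub h)
    have hposT : ∀ e ∈ T, 1 ≤ e := fun e he => hpos' e (hTsub he)
    have hdcT : ∀ s ∈ T, ∀ d, d ∣ s → d ∈ T := by
      intro s hs d hd
      obtain ⟨hsd', hslt⟩ := Nat.mem_properDivisors.mp hs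
      exact Nat.mem_properDivisors.mpr ⟨hd.trans hsd',
        lt_of_le_of_lt (Nat.le_of_dvd (hposT s hs) hd) hslt⟩
    have hC : T.lcm A = ∏ e ∈ T, B e := ih T hTS h0T hdcT
    have hgcd : gcd (A m) (S'.lcm A) = T.lcm A := by
      rw [my_gcd_finsetLcm hn]
      apply my_dvd_antisymm hn
      · apply Finset.lcm_dvd
        intro d hd
        rw [hsd m d hm1 (hpos' d hd)]
        have hmem : Nat.gcd m d ∈ T := by
          refine Nat.mem_properDivisors.mpr ⟨Nat.gcd_dvd_left m d, ?_⟩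
          refine lt_of_le_of_ne (Nat.le_of_dvd hm1 (Nat.gcd_dvd_left m d)) ?_
          intro h
          have hmd : m ∣ d := h ▸ Nat.gcd_dvd_right m d
          exact (Finset.ne_of_mem_erase hd)
            (hmax d (Finset.mem_of_mem_erase hd) hmd)
        exact Finset.dvd_lcm hmem
      · apply Finset.lcm_dvd
        intro e he
        have heS' : e ∈ S' := hTsub he
        have hgcde : Nat.gcd m e = e :=
          Nat.gcd_eq_right (Nat.mem_properDivisors.mp he).1
        calc A e = gcd (A m) (A e) := by
              rw [hsd m e hm1 (hposT e he), hgcde]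
          _ ∣ S'.lcm (fun d => gcd (A m) (A d)) := Finset.dvd_lcm heS'
    have hAm : A m = B m * ∏ e ∈ T, B e := by
      rw [hab m hm1, ← Nat.insert_self_properDivisors (Nat.one_le_iff_ne_zero.mp hm1),
        Finset.prod_insert Nat.self_notMem_properDivisors]
    have hins : S = insert m S' := (Finset.insert_erase hmS).symm
    have hCne : (∏ e ∈ T, B e) ≠ 0 :=
      Finset.prod_ne_zero_iff.mpr (fun e he => hB e (hposT e he))
    have h1 : (∏ e ∈ T, B e) * lcm (A m) (S'.lcm A) = A m * S'.lcm A := by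
      rw [← hC, ← hgcd]
      exact my_eq_of_associated hn (gcd_mul_lcm _ _)
    rw [hins, Finset.lcm_insert, Finset.prod_insert (Finset.notMem_erase m S)]
    apply mul_left_cancel₀ hCne
    rw [h1, hAm, hL, mul_assoc, mul_left_comm]

noncomputable instance assocNGCD {R : Type*} [CommMonoidWithZero R] [GCDMonoid R] :
    NormalizedGCDMonoid (Associates R) :=
  { (inferInstance : NormalizationMonoid (Associates R)),
    (inferInstance : GCDMonoid (Associates R)) with
    normalize_gcd := fun _ _ => normalize_eq _
    normalize_lcm := fun _ _ => normalize_eq _ }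

end Generic

/-- If `(a n)` is a strong divisibility sequence and `a n = ∏_{d ∣ n} b d`, then
`lcm(a 1, …, a n)` is associated to `b 1 * b 2 * ⋯ * b n`. -/
theorem lcm_associated_prod
    {R : Type*} [CommRing R] [IsDomain R] [GCDMonoid R]
    (a : ℕ → R) (ha : ∀ n, 1 ≤ n → a n ≠ 0)
    (hsd : ∀ m n, 1 ≤ m → 1 ≤ n → Associated (gcd (a m) (a n)) (a (Nat.gcd m n)))
    (b : ℕ → R) (hb : ∀ n, 1 ≤ n → b n ≠ 0)
    (hab : ∀ n, 1 ≤ n → a n = ∏ d ∈ n.divisors, b d) :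
    ∀ n, 1 ≤ n → Associated (iterLcm a n) (∏ i ∈ Finset.Icc 1 n, b i) := by
  intro n hn1
  have hn' : ∀ x : Associates R, normalize x = x := fun x => normalize_eq x
  set A : ℕ → Associates R := fun k => Associates.mk (a k) with hA
  set B : ℕ → Associates R := fun k => Associates.mk (b k) with hBdef
  have hmkprod : ∀ (s : Finset ℕ), Associates.mk (∏ d ∈ s, b d) = ∏ d ∈ s, B d := by
    intro s
    have h := map_prod (Associates.mkMonoidHom) b s
    simp only [Associates.mkMonoidHom_apply] at h
    exact h
  have hsd' : ∀ m k, 1 ≤ m → 1 ≤ k → gcd (A m) (A k) = A (Nat.gcd m k) := by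
    intro m k hm hk
    exact (Associates.gcd_mk_mk).trans
      (Associates.mk_eq_mk_iff_associated.mpr (hsd m k hm hk))
  have hB0 : ∀ k, 1 ≤ k → B k ≠ 0 := fun k hk => by
    simpa [hBdef, Associates.mk_ne_zero] using hb k hk
  have hab' : ∀ k, 1 ≤ k → A k = ∏ d ∈ k.divisors, B d := by
    intro k hk
    show Associates.mk (a k) = _
    rw [hab k hk, hmkprod]
  have hiter : ∀ k, Associates.mk (iterLcm a k) = (Finset.Icc 1 k).lcm A := by
    intro k
    induction k with
    | zero =>
        show Associates.mk 1 = (∅ : Finset ℕ).lcm A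
        simp
    | succ k ihk =>
        have hIcc : Finset.Icc 1 (k + 1) = insert (k + 1) (Finset.Icc 1 k) := by
          ext x; simp only [Finset.mem_Icc, Finset.mem_insert]; omega
        show Associates.mk (lcm (iterLcm a k) (a (k + 1))) = _
        rw [← Associates.lcm_mk_mk, ihk, hIcc, Finset.lcm_insert, lcm_comm]
  have hkey := key_lemma hn' A B hsd' hB0 hab' (Finset.Icc 1 n)
    (by simp) ?_
  · apply Associates.mk_eq_mk_iff_associated.mp
    rw [hiter n, hkey, hmkprod]
  · intro s hs d hd
    rw [Finset.mem_Icc] at hs ⊢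
    have hd1 : 1 ≤ d := Nat.pos_of_dvd_of_pos hd hs.1
    exact ⟨hd1, (Nat.le_of_dvd hs.1 hd).trans hs.2⟩
end

section
/- For every n ≥ 2, the n-th cyclotomic polynomial satisfies Φ_n(x) = lcm(x−1, x²−1, ..., xⁿ−1) / lcm(x−1, x²−1, ..., x^{n−1}−1) in ℤ[x] (up to sign). -/
open Polynomial

set_option maxHeartbeats 1000000

private lemma cyclo_prime {m : ℕ} (hm : 0 < m) : Prime (cyclotomic m ℤ) :=
  (cyclotomic.irreducible hm).prime

private lemma cyclo_not_dvd_prod {m : ℕ} :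
    ¬ (cyclotomic (m + 1) ℤ ∣ ∏ d ∈ Finset.Icc 1 m, cyclotomic d ℤ) := by
  intro h
  obtain ⟨d, hd, hdvd⟩ := (cyclo_prime (m := m + 1) (by omega)).exists_mem_finset_dvd h
  have hd' : 1 ≤ d ∧ d ≤ m := Finset.mem_Icc.mp hd
  have hassoc : Associated (cyclotomic (m + 1) ℤ) (cyclotomic d ℤ) :=
    (cyclotomic.irreducible (by omega)).associated_of_dvd
      (cyclotomic.irreducible (by omega)) hdvd
  have heq : cyclotomic (m + 1) ℤ = cyclotomic d ℤ :=
    eq_of_monic_of_associated (cyclotomic.monic _ _) (cyclotomic.monic _ _) hassoc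
  have := cyclotomic_injective heq
  omega

private lemma isRelPrime_cyclo {m : ℕ} :
    IsRelPrime (cyclotomic (m + 1) ℤ) (∏ d ∈ Finset.Icc 1 m, cyclotomic d ℤ) := by
  intro u hu hA
  rcases hu with ⟨e, he⟩
  rcases (cyclotomic.irreducible (n := m + 1) (by omega)).isUnit_or_isUnit he with h | h
  · exact h
  · exfalso
    apply cyclo_not_dvd_prod (m := m)
    have : cyclotomic (m + 1) ℤ ∣ u := he ▸ (associated_mul_unit_right u e h).symm.dvd
    exact this.trans hA

private lemma X_pow_sub_one_eq {m : ℕ} :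
    (X : ℤ[X]) ^ (m + 1) - 1 =
      cyclotomic (m + 1) ℤ * ∏ d ∈ (m + 1).properDivisors, cyclotomic d ℤ := by
  have h := prod_cyclotomic_eq_X_pow_sub_one (n := m + 1) (by omega) ℤ
  rw [← Nat.insert_self_properDivisors (by omega : m + 1 ≠ 0)] at h
  rw [← h, Finset.prod_insert Nat.self_notMem_properDivisors]

private lemma proper_dvd_prod {m : ℕ} :
    (∏ d ∈ (m + 1).properDivisors, cyclotomic d ℤ) ∣
      ∏ d ∈ Finset.Icc 1 m, cyclotomic d ℤ := by
  apply Finset.prod_dvd_prod_of_subset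
  intro d hd
  rw [Nat.mem_properDivisors] at hd
  have : 0 < d := Nat.pos_of_dvd_of_pos hd.1 (by omega)
  exact Finset.mem_Icc.mpr ⟨this, by omega⟩

private lemma lcm_assoc_prod (n : ℕ) (hn : 1 ≤ n) :
    Associated ((Finset.Icc 1 n).lcm (fun i => (X : ℤ[X]) ^ i - 1))
      (∏ d ∈ Finset.Icc 1 n, cyclotomic d ℤ) := by
  induction n with
  | zero => omega
  | succ n ih =>
    rcases Nat.eq_zero_or_pos n with rfl | hn'
    · simp only [Finset.Icc_self, Finset.lcm_singleton, Finset.prod_singleton,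
        pow_one, cyclotomic_one]
      exact normalize_associated _
    · have ih := ih hn'
      rw [← Finset.insert_Icc_right_eq_Icc_add_one (by omega : 1 ≤ n + 1), Finset.lcm_insert, Finset.prod_insert (by simp)]
      have hc : (X : ℤ[X]) ^ (n + 1) - 1 ∣ cyclotomic (n + 1) ℤ *
          ∏ d ∈ Finset.Icc 1 n, cyclotomic d ℤ :=
        by rw [X_pow_sub_one_eq]; exact mul_dvd_mul_left _ proper_dvd_prod
      apply associated_of_dvd_dvd
      · exact lcm_dvd hc (ih.dvd.trans (dvd_mul_left _ _))
      · have hp : cyclotomic (n + 1) ℤ ∣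
            lcm ((X : ℤ[X]) ^ (n + 1) - 1) ((Finset.Icc 1 n).lcm fun i => (X : ℤ[X]) ^ i - 1) :=
          (Dvd.intro _ X_pow_sub_one_eq.symm).trans (dvd_lcm_left _ _)
        have hA : (∏ d ∈ Finset.Icc 1 n, cyclotomic d ℤ) ∣
            lcm ((X : ℤ[X]) ^ (n + 1) - 1) ((Finset.Icc 1 n).lcm fun i => (X : ℤ[X]) ^ i - 1) :=
          ih.symm.dvd.trans (dvd_lcm_right _ _)
        exact (isRelPrime_cyclo (m := n)).mul_dvd hp hA

/-- For `n ≥ 2`, the `n`-th cyclotomic polynomial is, up to sign,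
`lcm(x-1, x²-1, …, xⁿ-1) / lcm(x-1, x²-1, …, x^{n-1}-1)` in `ℤ[x]`. -/
theorem cyclotomic_eq_lcm_quotient (n : ℕ) (hn : 2 ≤ n) :
    Associated ((Finset.Icc 1 n).lcm (fun i => (X : ℤ[X]) ^ i - 1))
      (((Finset.Icc 1 (n - 1)).lcm (fun i => (X : ℤ[X]) ^ i - 1)) *
        cyclotomic n ℤ) := by
  obtain ⟨m, rfl⟩ : ∃ m, n = m + 1 := ⟨n - 1, by omega⟩
  have h1 := lcm_assoc_prod (m + 1) (by omega)
  have h2 := lcm_assoc_prod m (by omega)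
  have hsplit : (∏ d ∈ Finset.Icc 1 (m + 1), cyclotomic d ℤ) =
      (∏ d ∈ Finset.Icc 1 m, cyclotomic d ℤ) * cyclotomic (m + 1) ℤ := by
    rw [← Finset.insert_Icc_right_eq_Icc_add_one (by omega : 1 ≤ m + 1), Finset.prod_insert (by simp), mul_comm]
  simp only [Nat.add_sub_cancel]
  exact h1.trans (hsplit ▸ ((h2.mul_right (cyclotomic (m + 1) ℤ)).symm))
end

section
/- For every integer b ≥ 2 and every n ≥ 2, Φ_n(b) = lcm(b−1, b²−1, ..., bⁿ−1) / lcm(b−1, b²−1, ..., b^{n−1}−1), where Φ_n is the n-th cyclotomic polynomial. -/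
open Polynomial Finset

-- product of cyclotomic evals over Icc 1 n divides lcm of b^i - 1
lemma aux_prod_dvd_lcm (b : ℤ) (hb : 2 ≤ b) (n : ℕ) :
    (∏ j ∈ Finset.Icc 1 n, (cyclotomic j ℤ).eval b) ∣
      ((Finset.Icc 1 n).lcm (fun i => b ^ i - 1)) := by
  set f : ℕ → ℤ := fun j => (cyclotomic j ℤ).eval b with hf
  have hb1 : (1 : ℤ) < b := by linarith
  have hfpos : ∀ j, 0 < f j := fun j => cyclotomic_pos' j hb1
  set L : ℤ := (Finset.Icc 1 n).lcm (fun i => b ^ i - 1) with hL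
  have hLnn : 0 ≤ L :=
    Int.nonneg_of_normalize_eq_self (Finset.normalize_lcm)
  have hLne : L ≠ 0 := by
    rw [hL, Ne, Finset.lcm_eq_zero_iff]
    rintro ⟨i, hi, h0⟩
    simp only [Finset.coe_Icc, Set.mem_Icc, Finset.mem_coe, Finset.mem_Icc] at hi
    have h1 : (1:ℤ) < b ^ i := one_lt_pow₀ hb1 (by omega)
    have h0 : b ^ i - 1 = 0 := h0
    linarith
  -- key step in ℕ
  set F : ℕ → ℕ := fun j => (f j).toNat with hF
  have hcast : ∀ j, (F j : ℤ) = f j := fun j => Int.toNat_of_nonneg (hfpos j).le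
  have hFne : ∀ j, F j ≠ 0 := fun j => by
    have := hfpos j; simp only [hF]; omega
  set L' : ℕ := L.toNat with hL'
  have hcastL : (L' : ℤ) = L := Int.toNat_of_nonneg hLnn
  have hL'ne : L' ≠ 0 := by
    intro h; apply hLne; omega
  -- the divisibility in ℕ
  have key : (∏ j ∈ Finset.Icc 1 n, F j) ∣ L' := by
    rw [← Nat.factorization_le_iff_dvd (Finset.prod_ne_zero_iff.mpr fun j _ => hFne j) hL'ne]
    intro p
    by_cases hp : p.Prime
    · -- split off the factors divisible by p
      set S : Finset ℕ := (Finset.Icc 1 n).filter (fun j => p ∣ F j) with hS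
      have hsplit : (∏ j ∈ Finset.Icc 1 n, F j)
          = (∏ j ∈ S, F j) * ∏ j ∈ (Finset.Icc 1 n).filter (fun j => ¬ p ∣ F j), F j :=
        (Finset.prod_filter_mul_prod_filter_not _ _ _).symm
      have h2 : ((∏ j ∈ (Finset.Icc 1 n).filter (fun j => ¬ p ∣ F j), F j)).factorization p = 0 := by
        apply Nat.factorization_eq_zero_of_not_dvd
        rw [hp.prime.dvd_finset_prod_iff]
        rintro ⟨j, hj, hdvd⟩
        simp only [Finset.mem_filter] at hj
        exact hj.2 hdvd
      have hSprod : (∏ j ∈ S, F j) ∣ L' := by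
        rcases S.eq_empty_or_nonempty with hSe | hSne
        · simp [hSe]
        -- every j ∈ S is d * p^(v_p j) where d = orderOf (b : ZMod p)
        haveI : Fact p.Prime := ⟨hp⟩
        set β : ZMod p := (b : ZMod p) with hβ
        have hroot : ∀ j ∈ S, (cyclotomic j (ZMod p)).IsRoot β := by
          intro j hj
          simp only [hS, Finset.mem_filter] at hj
          have hdj : (p : ℤ) ∣ f j := by
            obtain ⟨c, hc⟩ := hj.2
            exact ⟨c, by rw [← hcast j, hc]; push_cast; ring⟩
          have h0 : ((f j : ℤ) : ZMod p) = 0 := by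
            rw [ZMod.intCast_zmod_eq_zero_iff_dvd]; exact hdj
          have hev := Polynomial.eval_intCast_map (Int.castRingHom (ZMod p)) (cyclotomic j ℤ) b
          rw [map_cyclotomic_int] at hev
          rw [IsRoot.def, hβ, hev]
          simpa using h0
        set d : ℕ := orderOf β with hd
        have hform : ∀ j ∈ S, j = p ^ (j.factorization p) * d := by
          intro j hj
          have hj' := hj
          simp only [hS, Finset.mem_filter, Finset.mem_Icc] at hj'
          have hj0 : j ≠ 0 := by omega
          set k : ℕ := j.factorization p with hk
          set m : ℕ := j / p ^ k with hm
          have hjm : j = p ^ k * m := (Nat.ordProj_mul_ordCompl_eq_self j p).symm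
          have hpm : ¬ p ∣ m := Nat.not_dvd_ordCompl hp hj0
          have hm0 : m ≠ 0 := by
            intro h; rw [h, mul_zero] at hjm; exact hj0 hjm
          haveI : NeZero ((m : ZMod p)) := ⟨by
            rw [Ne, ZMod.natCast_eq_zero_iff]; exact hpm⟩
          have hr := hroot j hj
          rw [hjm] at hr
          have hprim : IsPrimitiveRoot β m :=
            (isRoot_cyclotomic_prime_pow_mul_iff_of_charP).mp hr
          rw [hjm, hprim.eq_orderOf]
        have hd0 : 0 < d := by
          obtain ⟨j, hj⟩ := hSne
          have := hform j hj
          have hj' := hj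
          simp only [hS, Finset.mem_filter, Finset.mem_Icc] at hj'
          by_contra h
          push_neg at h
          interval_cases d <;> omega
        set j₀ : ℕ := S.max' hSne with hj₀
        have hj₀S : j₀ ∈ S := S.max'_mem hSne
        have hj₀I : j₀ ∈ Finset.Icc 1 n := by
          simp only [hS, Finset.mem_filter] at hj₀S; exact hj₀S.1
        have hsub : S ⊆ j₀.divisors := by
          intro j hj
          rw [Nat.mem_divisors]
          have hjn : j ≤ j₀ := S.le_max' j hj
          have h1 := hform j hj
          have h2' := hform j₀ hj₀S
          have hkk : p ^ (j.factorization p) ≤ p ^ (j₀.factorization p) := by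
            have : p ^ (j.factorization p) * d ≤ p ^ (j₀.factorization p) * d := by
              rw [← h1, ← h2']; exact hjn
            exact Nat.le_of_mul_le_mul_right this hd0
          have hkle : j.factorization p ≤ j₀.factorization p :=
            (Nat.pow_le_pow_iff_right hp.one_lt).mp hkk
          constructor
          · rw [h1, h2']
            exact mul_dvd_mul (pow_dvd_pow p hkle) dvd_rfl
          · have : j₀ ∈ Finset.Icc 1 n := hj₀I
            simp only [Finset.mem_Icc] at this; omega
        -- ∏_{j∈S} f j ∣ b^{j₀} - 1 ∣ L  (in ℤ), then transfer to ℕ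
        have hIcc : j₀ ∈ Finset.Icc 1 n := hj₀I
        have hj₀pos : 0 < j₀ := by simp only [Finset.mem_Icc] at hIcc; omega
        have hdvd1 : (∏ j ∈ S, f j) ∣ b ^ j₀ - 1 := by
          have := Finset.prod_dvd_prod_of_subset S j₀.divisors f hsub
          have heq : ∏ j ∈ j₀.divisors, f j = b ^ j₀ - 1 := by
            have := prod_cyclotomic_eq_X_pow_sub_one hj₀pos ℤ
            calc ∏ j ∈ j₀.divisors, f j
                = eval b (∏ j ∈ j₀.divisors, cyclotomic j ℤ) := by rw [eval_prod]
              _ = eval b ((X : ℤ[X]) ^ j₀ - 1) := by rw [this]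
              _ = b ^ j₀ - 1 := by simp
          rwa [heq] at this
        have hdvd2 : (b ^ j₀ - 1) ∣ L := Finset.dvd_lcm hIcc
        have : (∏ j ∈ S, f j) ∣ L := hdvd1.trans hdvd2
        have : ((∏ j ∈ S, F j : ℕ) : ℤ) ∣ (L' : ℤ) := by
          rw [hcastL]; push_cast [hcast]; exact this
        exact_mod_cast this
      rw [hsplit, Nat.factorization_mul (Finset.prod_ne_zero_iff.mpr fun j _ => hFne j)
        (Finset.prod_ne_zero_iff.mpr fun j _ => hFne j), Finsupp.add_apply, h2, add_zero]
      exact (Nat.factorization_le_iff_dvd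
        (Finset.prod_ne_zero_iff.mpr fun j _ => hFne j) hL'ne).mpr hSprod p
    · simp [Nat.factorization_eq_zero_of_not_prime _ hp]
  -- transfer back to ℤ
  have : ((∏ j ∈ Finset.Icc 1 n, F j : ℕ) : ℤ) ∣ (L' : ℤ) := Int.natCast_dvd_natCast.mpr key
  rw [hcastL] at this
  calc (∏ j ∈ Finset.Icc 1 n, f j) = ((∏ j ∈ Finset.Icc 1 n, F j : ℕ) : ℤ) := by
        push_cast [hcast]; rfl
    _ ∣ L := this

lemma aux_lcm_eq_prod (b : ℤ) (hb : 2 ≤ b) (n : ℕ) :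
    ((Finset.Icc 1 n).lcm (fun i => b ^ i - 1)) =
      ∏ j ∈ Finset.Icc 1 n, (cyclotomic j ℤ).eval b := by
  have hb1 : (1 : ℤ) < b := by linarith
  have hfpos : ∀ j, 0 < (cyclotomic j ℤ).eval b := fun j => cyclotomic_pos' j hb1
  apply Int.dvd_antisymm
  · exact Int.nonneg_of_normalize_eq_self (Finset.normalize_lcm)
  · exact (Finset.prod_pos fun j _ => hfpos j).le
  · -- lcm ∣ prod
    apply Finset.lcm_dvd
    intro i hi
    simp only [Finset.mem_Icc] at hi
    have hi0 : 0 < i := hi.1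
    have heq : ∏ j ∈ i.divisors, (cyclotomic j ℤ).eval b = b ^ i - 1 := by
      have hp := prod_cyclotomic_eq_X_pow_sub_one hi0 ℤ
      calc ∏ j ∈ i.divisors, (cyclotomic j ℤ).eval b
          = eval b (∏ j ∈ i.divisors, cyclotomic j ℤ) := by rw [eval_prod]
        _ = eval b ((X : ℤ[X]) ^ i - 1) := by rw [hp]
        _ = b ^ i - 1 := by simp
    rw [← heq]
    apply Finset.prod_dvd_prod_of_subset
    intro d hd
    rw [Nat.mem_divisors] at hd
    simp only [Finset.mem_Icc]
    exact ⟨Nat.pos_of_dvd_of_pos hd.1 hi0, (Nat.le_of_dvd hi0 hd.1).trans hi.2⟩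
  · exact aux_prod_dvd_lcm b hb n

/-- For integers `b ≥ 2` and `n ≥ 2`,
`Φ_n(b) = lcm(b-1, b²-1, …, bⁿ-1) / lcm(b-1, b²-1, …, b^{n-1}-1)`. -/
theorem cyclotomic_eval_eq_lcm_quotient (b : ℤ) (hb : 2 ≤ b) (n : ℕ) (hn : 2 ≤ n) :
    (cyclotomic n ℤ).eval b =
      ((Finset.Icc 1 n).lcm (fun i => b ^ i - 1)) /
        ((Finset.Icc 1 (n - 1)).lcm (fun i => b ^ i - 1)) ∧
    ((Finset.Icc 1 (n - 1)).lcm (fun i => b ^ i - 1)) ∣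
      ((Finset.Icc 1 n).lcm (fun i => b ^ i - 1)) := by
  have hb1 : (1 : ℤ) < b := by linarith
  have hfpos : ∀ j, 0 < (cyclotomic j ℤ).eval b := fun j => cyclotomic_pos' j hb1
  have h1 := aux_lcm_eq_prod b hb n
  have h2 := aux_lcm_eq_prod b hb (n - 1)
  have hins : Finset.Icc 1 n = insert n (Finset.Icc 1 (n - 1)) := by
    ext i
    simp only [Finset.mem_Icc, Finset.mem_insert]
    omega
  have hnotmem : n ∉ Finset.Icc 1 (n - 1) := by
    simp only [Finset.mem_Icc]; omega
  have hprod : ∏ j ∈ Finset.Icc 1 n, (cyclotomic j ℤ).eval b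
      = (cyclotomic n ℤ).eval b * ∏ j ∈ Finset.Icc 1 (n - 1), (cyclotomic j ℤ).eval b := by
    rw [hins, Finset.prod_insert hnotmem]
  have hP0 : (∏ j ∈ Finset.Icc 1 (n - 1), (cyclotomic j ℤ).eval b) ≠ 0 :=
    (Finset.prod_pos fun j _ => hfpos j).ne'
  constructor
  · rw [h1, h2, hprod, Int.mul_ediv_cancel _ hP0]
  · apply Finset.lcm_dvd
    intro i hi
    apply Finset.dvd_lcm
    simp only [Finset.mem_Icc] at *
    omega
end

section
/- The Fibonacci polynomials defined by F_1(x) = 1, F_2(x) = x, F_{n+2}(x) = x·F_{n+1}(x) + F_n(x) form a strong divisibility sequence in ℤ[x]: gcd(F_m(x), F_n(x)) is associated to F_{gcd(m,n)}(x) for all m, n ≥ 1. -/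
open Polynomial

/-- The Fibonacci polynomials: `F₁ = 1`, `F₂ = x`, `F_{n+2} = x F_{n+1} + F_n`. -/
noncomputable def fibPoly : ℕ → ℤ[X]
  | 0 => 0
  | 1 => 1
  | n + 2 => X * fibPoly (n + 1) + fibPoly n

lemma fibPoly_add (m : ℕ) : ∀ n : ℕ, fibPoly (m + n + 1) =
    fibPoly (m + 1) * fibPoly (n + 1) + fibPoly m * fibPoly n
  | 0 => by simp [fibPoly]
  | 1 => by simp [fibPoly]; ring
  | (n + 2) => by
    have h1 := fibPoly_add m n
    have h2 := fibPoly_add m (n + 1)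
    have e1 : m + (n + 2) + 1 = (m + n + 1) + 2 := by ring
    have e2 : m + (n + 1) + 1 = (m + n) + 2 := by omega
    rw [e1, show fibPoly ((m + n + 1) + 2) = X * fibPoly (m + n + 2) + fibPoly (m + n + 1)
      from rfl, show (m : ℕ) + n + 2 = m + (n + 1) + 1 by ring, h2, h1,
      show fibPoly (n + 3) = X * fibPoly (n + 2) + fibPoly (n + 1) from rfl,
      show fibPoly (n + 2) = X * fibPoly (n + 1) + fibPoly n from rfl]
    ring

lemma isUnit_gcd_fibPoly_succ : ∀ n : ℕ, IsUnit (gcd (fibPoly n) (fibPoly (n + 1)))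
  | 0 => by simp [fibPoly]
  | (n + 1) => by
    have h : fibPoly (n + 1) ∣ fibPoly (n + 2) - fibPoly n := by
      rw [show fibPoly (n + 2) = X * fibPoly (n + 1) + fibPoly n from rfl]
      simp [mul_comm]
    rw [gcd_eq_of_dvd_sub_right h, gcd_comm]
    exact isUnit_gcd_fibPoly_succ n

lemma gcd_mul_of_isUnit_gcd {a b c : ℤ[X]} (h : IsUnit (gcd a b)) :
    Associated (gcd a (b * c)) (gcd a c) := by
  apply associated_of_dvd_dvd
  · have hd : gcd a (b * c) ∣ gcd (a * c) (b * c) :=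
      dvd_gcd (dvd_mul_of_dvd_left (gcd_dvd_left a (b * c)) c) (gcd_dvd_right a (b * c))
    rw [gcd_mul_right] at hd
    have hc : gcd a (b * c) ∣ c := by
      have hu : Associated (gcd a b * normalize c) c :=
        (((associated_one_iff_isUnit.mpr h).mul_right _).trans
          (by rw [one_mul]; exact (normalize_associated c)))
      exact hd.trans hu.dvd
    exact dvd_gcd (gcd_dvd_left _ _) hc
  · exact gcd_dvd_gcd dvd_rfl (dvd_mul_left c b)

lemma gcd_fibPoly_add (p q : ℕ) :
    Associated (gcd (fibPoly (q + 1)) (fibPoly (p + (q + 1)))) (gcd (fibPoly (q + 1)) (fibPoly p)) := by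
  have e : p + (q + 1) = q + p + 1 := by ring
  have hadd := fibPoly_add q p
  have hdvd : fibPoly (q + 1) ∣ fibPoly (q + p + 1) - fibPoly q * fibPoly p := by
    rw [hadd]; simp [mul_comm]
  rw [e, gcd_eq_of_dvd_sub_right hdvd]
  refine gcd_mul_of_isUnit_gcd ?_
  rw [gcd_comm]
  exact isUnit_gcd_fibPoly_succ q

lemma fibPoly_gcd (m n : ℕ) :
    Associated (gcd (fibPoly m) (fibPoly n)) (fibPoly (Nat.gcd m n)) := by
  induction m, n using Nat.gcd.induction with
  | H0 n => simpa [fibPoly, Nat.gcd_zero_left] using (normalize_associated (fibPoly n))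
  | H1 m n hm IH =>
    obtain ⟨q, rfl⟩ : ∃ q, m = q + 1 := ⟨m - 1, by omega⟩
    have key : ∀ k p : ℕ, Associated (gcd (fibPoly (q + 1)) (fibPoly (p + (q + 1) * k)))
        (gcd (fibPoly (q + 1)) (fibPoly p)) := by
      intro k
      induction k with
      | zero => intro p; simpa using Associated.refl _
      | succ k ih =>
        intro p
        have e : p + (q + 1) * (k + 1) = (p + (q + 1) * k) + (q + 1) := by ring
        rw [e]
        exact (gcd_fibPoly_add (p + (q + 1) * k) q).trans (ih p)
    have hn : n = n % (q + 1) + (q + 1) * (n / (q + 1)) := (Nat.mod_add_div n (q + 1)).symm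
    have h1 : Associated (gcd (fibPoly (q + 1)) (fibPoly n))
        (gcd (fibPoly (q + 1)) (fibPoly (n % (q + 1)))) := by
      conv_lhs => rw [hn]
      exact key _ _
    rw [gcd_comm (fibPoly (q + 1)) (fibPoly (n % (q + 1)))] at h1
    rw [Nat.gcd_rec]
    exact h1.trans IH

/-- The Fibonacci polynomials form a strong divisibility sequence in `ℤ[x]`. -/
theorem fibPoly_strong_divisibility (m n : ℕ) (hm : 1 ≤ m) (hn : 1 ≤ n) :
    Associated (gcd (fibPoly m) (fibPoly n)) (fibPoly (Nat.gcd m n)) := fibPoly_gcd m n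
end
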